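/- For the van der Pol system ẋ1 = x2 − μ(x1³/3 − x1), ẋ2 = −x1 with μ ≠ 0 (writing X1 = x2 − μ(x1³/3 − x1), X2 = −x1, 𝒳 = X1∂₁ + X2∂₂), there is no rational function a(x1,x2) satisfying X1³·𝒳a + 2x1·X1²·a + 6x1 = 0, given that the van der Pol system has no algebraic invariant curve (Cheng–Odani theorem may be assumed). -/

import Mathlib

open MvPolynomial

/-- X1 for the van der Pol system: x2 − μ(x1³/3 − x1). -/
noncomputable def vdpX1 (μ : ℝ) : MvPolynomial (Fin 2) ℝ :=
  X 1 - C μ * (C (3⁻¹ : ℝ) * X 0 ^ 3 - X 0)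

/-- X2 for the van der Pol system: −x1. -/
noncomputable def vdpX2 : MvPolynomial (Fin 2) ℝ := - X 0

/-- The vector field 𝒳 acting on polynomials: 𝒳p = X1·∂₁p + X2·∂₂p. -/
noncomputable def vdpXop (μ : ℝ) (p : MvPolynomial (Fin 2) ℝ) : MvPolynomial (Fin 2) ℝ :=
  vdpX1 μ * pderiv 0 p + vdpX2 * pderiv 1 p

set_option maxHeartbeats 1000000

namespace VdP

/-- The isomorphism separating the variable `x2`. -/
noncomputable def psi : MvPolynomial (Fin 2) ℝ ≃ₐ[ℝ] Polynomial (MvPolynomial (Fin 1) ℝ) :=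
  (renameEquiv ℝ (Equiv.swap 0 1)).trans (finSuccEquiv ℝ 1)

/-- The polynomial `μ(x1³/3 − x1)` in one variable. -/
noncomputable def g (μ : ℝ) : MvPolynomial (Fin 1) ℝ :=
  C μ * (C (3⁻¹ : ℝ) * X 0 ^ 3 - X 0)

/-- "Restriction to the curve X1 = 0": substitute `x2 = μ(x1³/3 − x1)`. -/
noncomputable def phi (μ : ℝ) : MvPolynomial (Fin 2) ℝ →+* MvPolynomial (Fin 1) ℝ :=
  (Polynomial.evalRingHom (g μ)).comp psi.toRingEquiv.toRingHom

lemma psi_X0 : psi (X 0) = Polynomial.C (X 0) := by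
  rw [psi, AlgEquiv.trans_apply, renameEquiv_apply, rename_X,
    show (Equiv.swap (0:Fin 2) 1) 0 = 1 from Equiv.swap_apply_left 0 1,
    show (1:Fin 2) = Fin.succ 0 from rfl]
  exact finSuccEquiv_X_succ

lemma psi_X1 : psi (X 1) = Polynomial.X := by
  rw [psi, AlgEquiv.trans_apply, renameEquiv_apply, rename_X,
    show (Equiv.swap (0:Fin 2) 1) 1 = 0 from Equiv.swap_apply_right 0 1]
  exact finSuccEquiv_X_zero

lemma psi_C (r : ℝ) : psi (C r) = Polynomial.C (C r) := by
  simpa [MvPolynomial.algebraMap_eq, Polynomial.algebraMap_apply] using psi.commutes r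

lemma phi_apply (μ : ℝ) (p : MvPolynomial (Fin 2) ℝ) :
    phi μ p = Polynomial.eval (g μ) (psi p) := rfl

lemma phi_X0 (μ : ℝ) : phi μ (X 0) = X 0 := by simp [phi_apply, psi_X0]

lemma phi_X1 (μ : ℝ) : phi μ (X 1) = g μ := by simp [phi_apply, psi_X1]

lemma phi_C (μ : ℝ) (r : ℝ) : phi μ (C r) = C r := by simp [phi_apply, psi_C]

lemma psi_vdpX1 (μ : ℝ) : psi (vdpX1 μ) = Polynomial.X - Polynomial.C (g μ) := by
  simp [vdpX1, g, map_sub, map_mul, map_pow, psi_X0, psi_X1, psi_C]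

lemma phi_vdpX1 (μ : ℝ) : phi μ (vdpX1 μ) = 0 := by
  simp [phi_apply, psi_vdpX1, g]

lemma vdpX1_ne_zero (μ : ℝ) : vdpX1 μ ≠ 0 := by
  intro h
  have h2 := psi_vdpX1 μ
  rw [h, map_zero] at h2
  exact (Polynomial.monic_X_sub_C (g μ)).ne_zero h2.symm

lemma dvd_of_phi_eq_zero {μ : ℝ} {p : MvPolynomial (Fin 2) ℝ} (h : phi μ p = 0) :
    vdpX1 μ ∣ p := by
  have hdiv := Polynomial.modByMonic_add_div (psi p) (Polynomial.X - Polynomial.C (g μ))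
  have hmod : (psi p) %ₘ (Polynomial.X - Polynomial.C (g μ))
      = Polynomial.C (Polynomial.eval (g μ) (psi p)) :=
    Polynomial.modByMonic_X_sub_C_eq_C_eval _ _
  rw [hmod, ← phi_apply, h, map_zero, zero_add] at hdiv
  refine ⟨psi.symm ((psi p) /ₘ (Polynomial.X - Polynomial.C (g μ))), ?_⟩
  apply psi.injective
  rw [map_mul, psi_vdpX1, AlgEquiv.apply_symm_apply, hdiv]

lemma phi_eq_zero_of_dvd {μ : ℝ} {p : MvPolynomial (Fin 2) ℝ} (h : vdpX1 μ ∣ p) :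
    phi μ p = 0 := by
  obtain ⟨q, rfl⟩ := h
  rw [map_mul, phi_vdpX1, zero_mul]

lemma prime_vdpX1 (μ : ℝ) : Prime (vdpX1 μ) := by
  refine ⟨vdpX1_ne_zero μ, ?_, ?_⟩
  · intro hu
    have : phi μ 1 = 0 := phi_eq_zero_of_dvd hu.dvd
    simp at this
  · intro a b hab
    have : phi μ a * phi μ b = 0 := by rw [← map_mul]; exact phi_eq_zero_of_dvd hab
    rcases mul_eq_zero.mp this with h | h
    · exact Or.inl (dvd_of_phi_eq_zero h)
    · exact Or.inr (dvd_of_phi_eq_zero h)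

lemma isUnit_S1 {w : MvPolynomial (Fin 1) ℝ} (h : IsUnit w) : ∃ c : ℝ, c ≠ 0 ∧ w = C c := by
  have h1 : IsUnit (finSuccEquiv ℝ 0 w) := h.map (finSuccEquiv ℝ 0)
  obtain ⟨v, hvu, hv⟩ := Polynomial.isUnit_iff.mp h1
  obtain ⟨c, hc⟩ : ∃ c : ℝ, v = C c := ⟨constantCoeff v, eq_C_of_isEmpty v⟩
  refine ⟨c, ?_, ?_⟩
  · rintro rfl
    rw [hc, map_zero] at hvu
    exact hvu.ne_zero rfl
  · apply (finSuccEquiv ℝ 0).injective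
    rw [← hv, hc]
    have : (finSuccEquiv ℝ 0) (C c) = Polynomial.C (C c) := by
      simpa [MvPolynomial.algebraMap_eq, Polynomial.algebraMap_apply] using
        (finSuccEquiv ℝ 0).commutes c
    rw [this]

lemma isUnit_R2 {u : MvPolynomial (Fin 2) ℝ} (h : IsUnit u) : ∃ c : ℝ, c ≠ 0 ∧ u = C c := by
  have h1 : IsUnit (psi u) := h.map psi
  obtain ⟨w, hwu, hw⟩ := Polynomial.isUnit_iff.mp h1
  obtain ⟨c, hc, rfl⟩ := isUnit_S1 hwu
  refine ⟨c, hc, psi.injective ?_⟩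
  rw [psi_C, hw]

lemma prime_deg_pos {q : MvPolynomial (Fin 2) ℝ} (hq : Prime q) : 0 < q.totalDegree := by
  rcases Nat.eq_zero_or_pos q.totalDegree with hdeg | h
  · exfalso
    have hC : q = C (coeff 0 q) := by
      ext m
      rcases eq_or_ne m 0 with rfl | hm
      · simp [coeff_C]
      · have hnot : m ∉ q.support := by
          intro hmem
          exact hm (Finsupp.ext fun x => (totalDegree_eq_zero_iff _ q).mp hdeg m hmem x)
        rw [notMem_support_iff.mp hnot, coeff_C, if_neg (Ne.symm hm)]
    have hc0 : coeff 0 q ≠ 0 := by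
      intro h0
      exact hq.ne_zero (by rw [hC, h0, map_zero])
    exact hq.not_unit (hC ▸ (isUnit_iff_ne_zero.mpr hc0).map (C : ℝ →+* _))
  · exact h

lemma Dadd (μ : ℝ) (p q : MvPolynomial (Fin 2) ℝ) :
    vdpXop μ (p + q) = vdpXop μ p + vdpXop μ q := by
  simp only [vdpXop, map_add]
  ring

lemma Dmul (μ : ℝ) (p q : MvPolynomial (Fin 2) ℝ) :
    vdpXop μ (p * q) = p * vdpXop μ q + q * vdpXop μ p := by
  simp only [vdpXop, pderiv_mul]
  ring

lemma DC (μ : ℝ) (r : ℝ) : vdpXop μ (C r) = 0 := by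
  simp [vdpXop, pderiv_C]

lemma Dpow (μ : ℝ) (p : MvPolynomial (Fin 2) ℝ) : ∀ n : ℕ,
    vdpXop μ (p ^ (n + 1)) = ((n : MvPolynomial (Fin 2) ℝ) + 1) * p ^ n * vdpXop μ p
  | 0 => by simp
  | n + 1 => by
    have h1 : p ^ (n + 2) = p * p ^ (n + 1) := by ring
    rw [h1, Dmul, Dpow μ p n]
    push_cast
    ring

lemma DX1 (μ : ℝ) : vdpXop μ (vdpX1 μ) = vdpX1 μ * (C μ * (1 - X 0 ^ 2)) - X 0 := by
  have h0 : pderiv 0 (vdpX1 μ) = C μ * (1 - X 0 ^ 2) := by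
    have h3 : (C ((3⁻¹:ℝ)) : MvPolynomial (Fin 2) ℝ) * 3 = 1 := by
      rw [show (3 : MvPolynomial (Fin 2) ℝ) = C (3:ℝ) from (map_ofNat C 3).symm, ← map_mul]
      norm_num
    simp [vdpX1, pderiv_X_self, pderiv_X_of_ne]
    linear_combination (-(C μ * X 0 ^ 2)) * h3
  have h1 : pderiv 1 (vdpX1 μ) = 1 := by
    simp [vdpX1, pderiv_X_self, pderiv_X_of_ne]
  rw [vdpXop, h0, h1, vdpX2]
  ring

lemma phi_DX1 (μ : ℝ) : phi μ (vdpXop μ (vdpX1 μ)) = - X 0 := by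
  rw [DX1]
  simp only [map_sub, map_mul, phi_vdpX1, zero_mul, phi_X0, zero_sub]

end VdP

/-- Assuming the Cheng–Odani theorem (no algebraic invariant curve for van der Pol),
there is no rational function a = a1/a2 satisfying X1³·𝒳a + 2x1·X1²·a + 6x1 = 0;
equivalently (clearing denominators) no polynomials a1, a2 with a2 ≠ 0 satisfy
X1³·(a2·𝒳a1 − a1·𝒳a2) + 2x1·X1²·a1·a2 + 6x1·a2² = 0. -/
theorem vdp_no_rational_solution (μ : ℝ) (hμ : μ ≠ 0)
    (hinv : ¬ ∃ p : MvPolynomial (Fin 2) ℝ, 0 < p.totalDegree ∧ p ∣ vdpXop μ p) :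
    ¬ ∃ a1 a2 : MvPolynomial (Fin 2) ℝ, a2 ≠ 0 ∧
      vdpX1 μ ^ 3 * (a2 * vdpXop μ a1 - a1 * vdpXop μ a2)
        + 2 * X 0 * vdpX1 μ ^ 2 * a1 * a2 + 6 * X 0 * a2 ^ 2 = 0 := by
  rintro ⟨A1, A2, hA2, heqA⟩
  obtain ⟨b2, b1, d, hrp, hd2, hd1⟩ :=
    UniqueFactorizationMonoid.exists_reduced_factors A2 hA2 A1
  subst hd1 hd2
  have hd0 : d ≠ 0 := left_ne_zero_of_mul hA2
  have hb2 : b2 ≠ 0 := right_ne_zero_of_mul hA2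
  have heq : vdpX1 μ ^ 3 * (b2 * vdpXop μ b1 - b1 * vdpXop μ b2)
      + 2 * X 0 * vdpX1 μ ^ 2 * b1 * b2 + 6 * X 0 * b2 ^ 2 = 0 := by
    have h0 : d ^ 2 * (vdpX1 μ ^ 3 * (b2 * vdpXop μ b1 - b1 * vdpXop μ b2)
        + 2 * X 0 * vdpX1 μ ^ 2 * b1 * b2 + 6 * X 0 * b2 ^ 2) = 0 := by
      rw [← heqA, VdP.Dmul μ d b1, VdP.Dmul μ d b2]
      ring
    exact (mul_eq_zero.mp h0).resolve_left (pow_ne_zero 2 hd0)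
  clear heqA hA2
  -- Every prime factor of b2 divides X1.
  have hfac : ∀ q : MvPolynomial (Fin 2) ℝ, Prime q → q ∣ b2 → q ∣ vdpX1 μ := by
    intro q hq hqb2
    by_contra hqX1
    obtain ⟨n, e, hne, hb2eq⟩ := WfDvdMonoid.max_power_factor hb2 hq.irreducible
    cases n with
    | zero =>
      rw [hb2eq] at hqb2
      exact hne (by simpa using hqb2)
    | succ m =>
      subst hb2eq
      have hDb2 : vdpXop μ (q ^ (m + 1) * e)
          = q ^ (m + 1) * vdpXop μ e
            + ((m : MvPolynomial (Fin 2) ℝ) + 1) * q ^ m * e * vdpXop μ q := by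
        rw [VdP.Dmul μ _ e, VdP.Dpow μ q m]
        ring
      have hdvd : q ^ (m + 1) ∣ vdpX1 μ ^ 3 * b1 * vdpXop μ (q ^ (m + 1) * e) :=
        ⟨e * (vdpX1 μ ^ 3 * vdpXop μ b1 + 2 * X 0 * vdpX1 μ ^ 2 * b1
          + 6 * X 0 * (q ^ (m + 1) * e)), by linear_combination -heq⟩
      rw [hDb2] at hdvd
      have hdvd2 : q ^ m * q ∣ q ^ m * (((m : MvPolynomial (Fin 2) ℝ) + 1)
          * (vdpX1 μ ^ 3 * (b1 * (e * vdpXop μ q)))) := by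
        rw [← pow_succ]
        have h3 : q ^ m * (((m : MvPolynomial (Fin 2) ℝ) + 1)
            * (vdpX1 μ ^ 3 * (b1 * (e * vdpXop μ q))))
            = vdpX1 μ ^ 3 * b1 * (q ^ (m + 1) * vdpXop μ e
              + ((m : MvPolynomial (Fin 2) ℝ) + 1) * q ^ m * e * vdpXop μ q)
              - q ^ (m + 1) * (vdpX1 μ ^ 3 * b1 * vdpXop μ e) := by ring
        rw [h3]
        exact dvd_sub hdvd (dvd_mul_right _ _)
      have hq' : q ∣ ((m : MvPolynomial (Fin 2) ℝ) + 1)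
          * (vdpX1 μ ^ 3 * (b1 * (e * vdpXop μ q))) :=
        (mul_dvd_mul_iff_left (pow_ne_zero m hq.ne_zero)).mp hdvd2
      have hmu : IsUnit ((m : MvPolynomial (Fin 2) ℝ) + 1) := by
        have hCm : (C ((m : ℝ) + 1) : MvPolynomial (Fin 2) ℝ)
            = (m : MvPolynomial (Fin 2) ℝ) + 1 := by
          rw [map_add, map_one, map_natCast]
        rw [← hCm]
        exact (isUnit_iff_ne_zero.mpr (by positivity)).map (C : ℝ →+* _)
      rcases hq.dvd_mul.mp hq' with h | h
      · exact hq.not_unit (isUnit_of_dvd_unit h hmu)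
      rcases hq.dvd_mul.mp h with h | h
      · exact hqX1 (hq.dvd_of_dvd_pow h)
      rcases hq.dvd_mul.mp h with h | h
      · exact hq.not_unit (hrp.symm h hqb2)
      rcases hq.dvd_mul.mp h with h | h
      · exact hne h
      · exact hinv ⟨q, VdP.prime_deg_pos hq, h⟩
  -- Classification: b2 = C c * X1 ^ k.
  have hclass : ∀ b : MvPolynomial (Fin 2) ℝ, b ≠ 0 →
      (∀ q, Prime q → q ∣ b → q ∣ vdpX1 μ) →
      ∃ (k : ℕ) (c : ℝ), c ≠ 0 ∧ b = C c * vdpX1 μ ^ k := by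
    intro b
    induction b using UniqueFactorizationMonoid.induction_on_prime with
    | h₁ =>
      intro h
      exact absurd rfl h
    | h₂ x hx =>
      intro _ _
      obtain ⟨c, hc, rfl⟩ := VdP.isUnit_R2 hx
      exact ⟨0, c, hc, by simp⟩
    | h₃ a p ha hp ih =>
      intro hpa hall
      obtain ⟨k, c, hc, hac⟩ := ih ha (fun q hq hqa => hall q hq (hqa.mul_left p))
      have hpX1 : p ∣ vdpX1 μ := hall p hp (dvd_mul_right p a)
      have hassoc : Associated p (vdpX1 μ) :=
        hp.irreducible.associated_of_dvd (VdP.prime_vdpX1 μ).irreducible hpX1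
      obtain ⟨u, hu⟩ := hassoc
      obtain ⟨c', hc', hcu⟩ := VdP.isUnit_R2 u⁻¹.isUnit
      have hpeq : p = C c' * vdpX1 μ := by
        have h1 : p = vdpX1 μ * ↑u⁻¹ := by
          rw [← hu, mul_assoc]
          simp
        rw [h1, hcu]
        ring
      refine ⟨k + 1, c' * c, mul_ne_zero hc' hc, ?_⟩
      rw [hpeq, hac, map_mul]
      ring
  obtain ⟨k, c, hc, rfl⟩ := hclass b2 hb2 hfac
  clear hclass hfac hb2
  rcases k with _ | m
  · -- k = 0 : the equation forces 6 x1 c² = 0 on the curve.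
    have h6 : (6 : MvPolynomial (Fin 1) ℝ) * X 0 * (C c) ^ 2 = 0 := by
      have h := congrArg (VdP.phi μ) heq
      simp only [map_add, map_sub, map_mul, map_pow, map_zero, map_ofNat,
        VdP.phi_vdpX1, VdP.phi_C, VdP.phi_X0] at h
      linear_combination h
    have h2 := congrArg (MvPolynomial.eval (fun _ : Fin 1 => (1 : ℝ))) h6
    simp only [map_mul, map_pow, map_ofNat, map_zero, eval_X, eval_C] at h2
    have : c = 0 := by nlinarith [h2, sq_nonneg c]
    exact hc this
  · -- k = m + 1
    have hDb2 : vdpXop μ (C c * vdpX1 μ ^ (m + 1))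
        = C c * (((m : MvPolynomial (Fin 2) ℝ) + 1) * vdpX1 μ ^ m * vdpXop μ (vdpX1 μ)) := by
      rw [VdP.Dmul, VdP.Dpow, VdP.DC]
      ring
    have hF : vdpX1 μ ^ (m + 2) * (C c * (vdpX1 μ ^ 2 * vdpXop μ b1
        - ((m : MvPolynomial (Fin 2) ℝ) + 1) * vdpX1 μ * b1 * vdpXop μ (vdpX1 μ)
        + 2 * X 0 * vdpX1 μ * b1 + 6 * C c * X 0 * vdpX1 μ ^ m)) = 0 := by
      linear_combination heq + vdpX1 μ ^ 3 * b1 * hDb2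
    have hF0 : vdpX1 μ ^ 2 * vdpXop μ b1
        - ((m : MvPolynomial (Fin 2) ℝ) + 1) * vdpX1 μ * b1 * vdpXop μ (vdpX1 μ)
        + 2 * X 0 * vdpX1 μ * b1 + 6 * C c * X 0 * vdpX1 μ ^ m = 0 := by
      rcases mul_eq_zero.mp hF with h | h
      · exact absurd h (pow_ne_zero _ (VdP.vdpX1_ne_zero μ))
      rcases mul_eq_zero.mp h with h | h
      · exact absurd h (by simpa using hc)
      · exact h
    rcases m with _ | j
    · -- k = 1
      have h6 : X 0 * (6 * (C c : MvPolynomial (Fin 1) ℝ)) = 0 := by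
        have h := congrArg (VdP.phi μ) hF0
        simp only [map_add, map_sub, map_mul, map_pow, map_zero, map_ofNat, map_natCast,
          Nat.cast_zero, VdP.phi_vdpX1, VdP.phi_C, VdP.phi_X0, VdP.phi_DX1] at h
        linear_combination h
      have h2 := congrArg (MvPolynomial.eval (fun _ : Fin 1 => (1 : ℝ))) h6
      simp only [map_mul, map_ofNat, map_zero, eval_X, eval_C] at h2
      have : c = 0 := by linarith
      exact hc this
    · -- k = j + 2
      have hG : vdpX1 μ * (vdpX1 μ * vdpXop μ b1
          - ((j : MvPolynomial (Fin 2) ℝ) + 2) * b1 * vdpXop μ (vdpX1 μ)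
          + 2 * X 0 * b1 + 6 * C c * X 0 * vdpX1 μ ^ j) = 0 := by
        linear_combination (norm := (push_cast; ring1)) hF0
      have hG0 : vdpX1 μ * vdpXop μ b1
          - ((j : MvPolynomial (Fin 2) ℝ) + 2) * b1 * vdpXop μ (vdpX1 μ)
          + 2 * X 0 * b1 + 6 * C c * X 0 * vdpX1 μ ^ j = 0 :=
        (mul_eq_zero.mp hG).resolve_left (VdP.vdpX1_ne_zero μ)
      have hphiG := congrArg (VdP.phi μ) hG0
      simp only [map_add, map_sub, map_mul, map_pow, map_zero, map_ofNat, map_natCast,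
        VdP.phi_vdpX1, VdP.phi_C, VdP.phi_X0, VdP.phi_DX1] at hphiG
      rcases j with _ | l
      · -- k = 2 : the delicate case.
        have h4 : (4 : MvPolynomial (Fin 1) ℝ) * VdP.phi μ b1 + 6 * C c = 0 := by
          have hx : X 0 * ((4 : MvPolynomial (Fin 1) ℝ) * VdP.phi μ b1 + 6 * C c) = 0 := by
            linear_combination (norm := (push_cast; ring1)) hphiG
          exact (mul_eq_zero.mp hx).resolve_left (MvPolynomial.X_ne_zero 0)
        have h4ne : (4 : MvPolynomial (Fin 1) ℝ) ≠ 0 := by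
          rw [show (4 : MvPolynomial (Fin 1) ℝ) = C (4 : ℝ) from (map_ofNat _ _).symm]
          simp only [ne_eq, C_eq_zero]
          norm_num
        have hkey : VdP.phi μ (b1 + C (3 / 2 * c)) = 0 := by
          have hrelS : (4 : MvPolynomial (Fin 1) ℝ) * C (3 / 2 * c) = 6 * C c := by
            rw [show (4 : MvPolynomial (Fin 1) ℝ) = C (4 : ℝ) from (map_ofNat _ _).symm,
              show (6 : MvPolynomial (Fin 1) ℝ) = C (6 : ℝ) from (map_ofNat _ _).symm,
              ← map_mul, ← map_mul]
            congr 1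
            ring
          have h44 : (4 : MvPolynomial (Fin 1) ℝ) * VdP.phi μ (b1 + C (3 / 2 * c)) = 0 := by
            rw [map_add, VdP.phi_C]
            linear_combination h4 + hrelS
          exact (mul_eq_zero.mp h44).resolve_left h4ne
        obtain ⟨b, hb⟩ := VdP.dvd_of_phi_eq_zero hkey
        have e1 : vdpXop μ b1 = vdpX1 μ * vdpXop μ b + b * vdpXop μ (vdpX1 μ) := by
          have h2 := congrArg (vdpXop μ) hb
          rw [VdP.Dadd, VdP.DC, VdP.Dmul] at h2
          linear_combination h2
        have hrel : (2 : MvPolynomial (Fin 2) ℝ) * C (3 / 2 * c) = 3 * C c := by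
          rw [show (2 : MvPolynomial (Fin 2) ℝ) = C (2 : ℝ) from (map_ofNat _ _).symm,
            show (3 : MvPolynomial (Fin 2) ℝ) = C (3 : ℝ) from (map_ofNat _ _).symm,
            ← map_mul, ← map_mul]
          congr 1
          ring
        have hDX1 := VdP.DX1 μ
        have step2 : vdpX1 μ * (vdpX1 μ * vdpXop μ b + b * vdpXop μ (vdpX1 μ))
            - 2 * b1 * vdpXop μ (vdpX1 μ) + 2 * X 0 * b1 + 6 * C c * X 0 = 0 := by
          linear_combination (norm := (push_cast; ring1)) hG0 - vdpX1 μ * e1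
        have hH : vdpX1 μ * (vdpX1 μ * vdpXop μ b - b * vdpXop μ (vdpX1 μ) + 2 * X 0 * b
            + 3 * C c * (C μ * (1 - X 0 ^ 2))) = 0 := by
          linear_combination step2 + (2 * vdpXop μ (vdpX1 μ) - 2 * X 0) * hb
            + (2 * X 0 - vdpX1 μ * (C μ * (1 - X 0 ^ 2))) * hrel
            + (-(2 * C (3 / 2 * c))) * hDX1
        have hH0 : vdpX1 μ * vdpXop μ b - b * vdpXop μ (vdpX1 μ) + 2 * X 0 * b
            + 3 * C c * (C μ * (1 - X 0 ^ 2)) = 0 :=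
          (mul_eq_zero.mp hH).resolve_left (VdP.vdpX1_ne_zero μ)
        have hphiH := congrArg (VdP.phi μ) hH0
        simp only [map_add, map_sub, map_mul, map_pow, map_zero, map_one, map_ofNat,
          VdP.phi_vdpX1, VdP.phi_C, VdP.phi_X0, VdP.phi_DX1] at hphiH
        have h2 := congrArg (MvPolynomial.eval (fun _ : Fin 1 => (0 : ℝ))) hphiH
        simp only [map_add, map_sub, map_mul, map_pow, map_zero, map_one, map_ofNat, map_neg,
          eval_X, eval_C] at h2
        have : c * μ = 0 := by nlinarith [h2]
        rcases mul_eq_zero.mp this with h | h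
        · exact hc h
        · exact hμ h
      · -- k = l + 3 : X1 divides b1, contradicting coprimality.
        have hX : X 0 * (((l : MvPolynomial (Fin 1) ℝ) + 5) * VdP.phi μ b1) = 0 := by
          linear_combination (norm := (push_cast; ring1)) hphiG
        have hl5 : ((l : MvPolynomial (Fin 1) ℝ) + 5) ≠ 0 := by
          have : ((l : MvPolynomial (Fin 1) ℝ) + 5) = ((l + 5 : ℕ) : MvPolynomial (Fin 1) ℝ) := by
            push_cast
            ring
          rw [this]
          exact Nat.cast_ne_zero.mpr (by omega)
        have hphib1 : VdP.phi μ b1 = 0 := by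
          rcases mul_eq_zero.mp hX with h | h
          · exact absurd h (MvPolynomial.X_ne_zero 0)
          · exact (mul_eq_zero.mp h).resolve_left hl5
        have hX1b1 : vdpX1 μ ∣ b1 := VdP.dvd_of_phi_eq_zero hphib1
        have hX1b2 : vdpX1 μ ∣ C c * vdpX1 μ ^ (l + 1 + 1 + 1) :=
          dvd_mul_of_dvd_right (dvd_pow_self _ (Nat.succ_ne_zero _)) _
        exact (VdP.prime_vdpX1 μ).not_unit (hrp.symm hX1b1 hX1b2)
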